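/- Let X be a Lévy process with Lévy measure Π satisfying Π(ℝ) > 0. Then P(X_t > 0) → 1 as t → ∞ if and only if X_t → +∞ in probability as t → ∞ (i.e. for every K ∈ ℝ, P(X_t ≤ K) → 0 as t → ∞). -/

import Mathlib

open MeasureTheory ProbabilityTheory Filter Set Function
open scoped ENNReal Topology

noncomputable section

variable {Ω : Type*} [MeasurableSpace Ω]

/-- The jump of a path `f` at time `t`: `Δf(t) = f(t) - f(t-)`. -/
def pathJump (f : ℝ → ℝ) (t : ℝ) : ℝ := f t - Function.leftLim f t

/-- `X` is a (real-valued) Lévy process under the probability measure `P`: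
it starts at `0`, has a.s. càdlàg paths on `[0,∞)`, stationary increments and
independent increments. -/
structure IsLevyProcess (P : Measure Ω) (X : ℝ → Ω → ℝ) : Prop where
  measurable : ∀ t : ℝ, Measurable (X t)
  init : ∀ᵐ ω ∂P, X 0 ω = 0
  cadlag : ∀ᵐ ω ∂P, ∀ t : ℝ, 0 ≤ t →
    ContinuousWithinAt (fun s => X s ω) (Ici t) t ∧
      (0 < t → ∃ l : ℝ, Tendsto (fun s => X s ω) (𝓝[<] t) (𝓝 l))
  stationary : ∀ s t : ℝ, 0 ≤ s → 0 ≤ t →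
    IdentDistrib (fun ω => X (s + t) ω - X s ω) (X t) P P
  indep : ∀ t : ℕ → ℝ, 0 ≤ t 0 → Monotone t →
    iIndepFun (fun i ω => X (t (i + 1)) ω - X (t i) ω) P

/-- `Pi` is the Lévy measure of `X` under `P`: for every Borel set `B` whose closure
does not contain `0`, `Pi B` is the expected number of times `t ∈ (0,1]` at which the
jump of `X` lies in `B`. -/
def IsLevyMeasureOf (Pi : Measure ℝ) (P : Measure Ω) (X : ℝ → Ω → ℝ) : Prop :=
  ∀ B : Set ℝ, MeasurableSet B → 0 ∉ closure B →
    Pi B = ∫⁻ ω, Measure.count {t : ℝ | t ∈ Ioc (0 : ℝ) 1 ∧ pathJump (fun s => X s ω) t ∈ B} ∂P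

/-- `τ` is (a.s.) the increasing enumeration of the times of the jumps of `X` lying in the
set `C`, with `τ 0 = 0`. -/
def IsJumpTimeEnum (P : Measure Ω) (X : ℝ → Ω → ℝ) (C : Set ℝ) (τ : ℕ → Ω → ℝ) : Prop :=
  ∀ᵐ ω ∂P, τ 0 ω = 0 ∧ StrictMono (fun n => τ n ω) ∧
    Tendsto (fun n => τ n ω) atTop atTop ∧
    ∀ t : ℝ, 0 < t → (pathJump (fun s => X s ω) t ∈ C ↔ ∃ n : ℕ, τ (n + 1) ω = t)

/-- `b` is regularly varying at `∞` with index `α`. -/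
def RegularlyVarying (α : ℝ) (b : ℝ → ℝ) : Prop :=
  Measurable b ∧ (∀ x : ℝ, 0 < x → 0 < b x) ∧
    ∀ l : ℝ, 0 < l → Tendsto (fun x => b (l * x) / b x) atTop (𝓝 (l ^ α))


section AuxLevy

variable {P : Measure Ω} [IsProbabilityMeasure P] {X : ℝ → Ω → ℝ}

lemma identDistrib_measure_preimage {α : Type*} [MeasurableSpace α] {f g : Ω → α}
    (h : IdentDistrib f g P P) {s : Set α} (hs : MeasurableSet s) :
    P (f ⁻¹' s) = P (g ⁻¹' s) := by
  rw [← Measure.map_apply₀ h.aemeasurable_fst hs.nullMeasurableSet,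
    ← Measure.map_apply₀ h.aemeasurable_snd hs.nullMeasurableSet, h.map_eq]

lemma levy_indep_incr (hX : IsLevyProcess P X) {a b c : ℝ} (ha : 0 ≤ a) (hab : a ≤ b)
    (hbc : b ≤ c) :
    IndepFun (fun ω => X b ω - X a ω) (fun ω => X c ω - X b ω) P := by
  set t : ℕ → ℝ := fun n => if n = 0 then a else if n = 1 then b else c with ht
  have h0 : 0 ≤ t 0 := by simpa [ht] using ha
  have hm : Monotone t := by
    apply monotone_nat_of_le_succ
    intro n
    match n with
    | 0 => simpa [ht] using hab
    | 1 => simpa [ht] using hbc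
    | (n+2) => simp [ht]
  have h := (hX.indep t h0 hm).indepFun (i := 0) (j := 1) (by decide)
  simpa [ht] using h

lemma levy_indep_base (hX : IsLevyProcess P X) {b c : ℝ} (hb : 0 ≤ b) (hbc : b ≤ c) :
    IndepFun (X b) (fun ω => X c ω - X b ω) P := by
  have h := levy_indep_incr hX le_rfl hb hbc
  refine h.congr ?_ ?_
  · filter_upwards [hX.init] with ω h0
    simp [h0]
  · exact EventuallyEq.rfl

end AuxLevy
section AuxLevy2

variable {P : Measure Ω} [IsProbabilityMeasure P] {X : ℝ → Ω → ℝ}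

set_option linter.unusedSectionVars false

/-- `E[exp(-l · X_t)]` as a lower integral. -/
def expInt (P : Measure Ω) (X : ℝ → Ω → ℝ) (l t : ℝ) : ℝ≥0∞ :=
  ∫⁻ ω, ENNReal.ofReal (Real.exp (-(l * X t ω))) ∂P

lemma measurable_expIntegrand (hX : IsLevyProcess P X) (l t : ℝ) :
    Measurable fun ω => ENNReal.ofReal (Real.exp (-(l * X t ω))) :=
  ENNReal.measurable_ofReal.comp
    (Real.measurable_exp.comp (((hX.measurable t).const_mul l).neg))

lemma expInt_zero (hX : IsLevyProcess P X) (l : ℝ) : expInt P X l 0 = 1 := by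
  have : (fun ω => ENNReal.ofReal (Real.exp (-(l * X 0 ω)))) =ᵐ[P]
      fun _ => (1 : ℝ≥0∞) := by
    filter_upwards [hX.init] with ω h0
    simp [h0]
  rw [expInt, lintegral_congr_ae this]
  simp

lemma expInt_nat_mul (hX : IsLevyProcess P X) {u : ℝ} (hu : 0 ≤ u) (l : ℝ) (n : ℕ) :
    expInt P X l (n * u) = (expInt P X l u) ^ n := by
  induction n with
  | zero => simpa using expInt_zero hX l
  | succ n ih =>
    have hb : (0:ℝ) ≤ n * u := by positivity
    have hbc : (n:ℝ) * u ≤ (n + 1 : ℕ) * u := by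
      push_cast
      nlinarith
    have hsum : ((n:ℝ) * u) + u = ((n + 1 : ℕ) : ℝ) * u := by push_cast; ring
    set b : ℝ := (n : ℝ) * u with hbdef
    set c : ℝ := ((n + 1 : ℕ) : ℝ) * u with hcdef
    have φmeas : Measurable fun x : ℝ => ENNReal.ofReal (Real.exp (-(l * x))) :=
      ENNReal.measurable_ofReal.comp
        (Real.measurable_exp.comp ((measurable_id.const_mul l).neg))
    have hindep :
        IndepFun (fun ω => ENNReal.ofReal (Real.exp (-(l * X b ω))))
          (fun ω => ENNReal.ofReal (Real.exp (-(l * (X c ω - X b ω))))) P :=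
      (levy_indep_base hX hb hbc).comp φmeas φmeas
    have hsplit : ∀ ω, ENNReal.ofReal (Real.exp (-(l * X c ω))) =
        ENNReal.ofReal (Real.exp (-(l * X b ω))) *
          ENNReal.ofReal (Real.exp (-(l * (X c ω - X b ω)))) := by
      intro ω
      rw [← ENNReal.ofReal_mul (Real.exp_pos _).le, ← Real.exp_add]
      ring_nf
    have hmul : expInt P X l c =
        (expInt P X l b) *
          ∫⁻ ω, ENNReal.ofReal (Real.exp (-(l * (X c ω - X b ω)))) ∂P := by
      unfold expInt
      simp_rw [hsplit]
      exact lintegral_mul_eq_lintegral_mul_lintegral_of_indepFun''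
        ((measurable_expIntegrand hX l b).aemeasurable)
        ((φmeas.comp (((hX.measurable c).sub (hX.measurable b)))).aemeasurable) hindep
    have hident : (∫⁻ ω, ENNReal.ofReal (Real.exp (-(l * (X c ω - X b ω)))) ∂P) =
        expInt P X l u := by
      have hst := hX.stationary b u hb hu
      have : IdentDistrib (fun ω => X c ω - X b ω) (X u) P P := by
        convert hst using 2 with ω
        rw [← hsum]
      exact (this.comp φmeas).lintegral_eq
    rw [hmul, hident, ih, pow_succ]

/-- Chernoff/Markov bound. -/
lemma chernoff_bound (hX : IsLevyProcess P X) {l : ℝ} (hl : 0 ≤ l) (t K : ℝ) :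
    P {ω | X t ω ≤ K} ≤ ENNReal.ofReal (Real.exp (l * K)) * expInt P X l t := by
  set ε : ℝ≥0∞ := ENNReal.ofReal (Real.exp (-(l * K))) with hε
  have hεpos : ε ≠ 0 := by
    simp [hε, ENNReal.ofReal_eq_zero, not_le, Real.exp_pos]
  have hεtop : ε ≠ ∞ := ENNReal.ofReal_ne_top
  have hsub : {ω | X t ω ≤ K} ⊆
      {ω | ε ≤ ENNReal.ofReal (Real.exp (-(l * X t ω)))} := by
    intro ω hω
    simp only [mem_setOf_eq] at hω ⊢
    exact ENNReal.ofReal_le_ofReal (Real.exp_le_exp.2 (by nlinarith))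
  have hmarkov := mul_meas_ge_le_lintegral₀ (μ := P)
    ((measurable_expIntegrand hX l t).aemeasurable) ε
  have h1 : ε * P {ω | X t ω ≤ K} ≤ expInt P X l t :=
    le_trans (mul_le_mul_right (measure_mono hsub) ε) hmarkov
  have h2 : P {ω | X t ω ≤ K} ≤ ε⁻¹ * expInt P X l t := by
    rw [← one_mul (P {ω | X t ω ≤ K}), ← ENNReal.inv_mul_cancel hεpos hεtop, mul_assoc]
    exact mul_le_mul_right h1 ε⁻¹
  have hinv : ε⁻¹ = ENNReal.ofReal (Real.exp (l * K)) := by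
    rw [hε, show -(l * K) = -(l*K) from rfl]
    rw [show Real.exp (-(l * K)) = (Real.exp (l * K))⁻¹ by rw [Real.exp_neg],
      ENNReal.ofReal_inv_of_pos (Real.exp_pos _), inv_inv]
  rwa [hinv] at h2

end AuxLevy2
section AuxLevy3

variable {P : Measure Ω} [IsProbabilityMeasure P] {X : ℝ → Ω → ℝ}

set_option linter.unusedSectionVars false

lemma tail_bound (hX : IsLevyProcess P X) {u l δ K : ℝ} (hu : 0 ≤ u) (hl : 0 < l)
    (hδ : 0 < δ) (hbelow : ∀ᵐ ω ∂P, -K < X u ω) (hge : 1 ≤ expInt P X l u) :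
    P {ω | δ < |X u ω|} ≤ ENNReal.ofReal (Real.exp (l * K)) * P {ω | X u ω ≤ 0}
      + ENNReal.ofReal (Real.exp (-(l * δ))) := by
  set A := {ω | X u ω ≤ 0} with hAdef
  set C := {ω | δ < X u ω} with hCdef
  have hA : MeasurableSet A := measurableSet_le (hX.measurable u) measurable_const
  have hC : MeasurableSet C := measurableSet_lt measurable_const (hX.measurable u)
  set a := ENNReal.ofReal (Real.exp (l * K)) with hadef
  set r := ENNReal.ofReal (Real.exp (-(l * δ))) with hrdef
  set B := (A ∪ C)ᶜ with hBdef
  have hB : MeasurableSet B := (hA.union hC).compl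
  have hstep : expInt P X l u ≤ a * P A + P B + r * P C := by
    have hmono : (fun ω => ENNReal.ofReal (Real.exp (-(l * X u ω)))) ≤ᵐ[P]
        fun ω => A.indicator (fun _ => a) ω + B.indicator (fun _ => (1:ℝ≥0∞)) ω
          + C.indicator (fun _ => r) ω := by
      filter_upwards [hbelow] with ω hω
      rcases le_or_gt (X u ω) 0 with h0 | h0
      · have hmemA : ω ∈ A := h0
        calc ENNReal.ofReal (Real.exp (-(l * X u ω))) ≤ a :=
              ENNReal.ofReal_le_ofReal (Real.exp_le_exp.2 (by nlinarith))
          _ = A.indicator (fun _ => a) ω := (Set.indicator_of_mem hmemA (fun _ => a)).symm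
          _ ≤ A.indicator (fun _ => a) ω + B.indicator (fun _ => (1:ℝ≥0∞)) ω :=
              self_le_add_right _ _
          _ ≤ _ := self_le_add_right _ _
      · rcases le_or_gt (X u ω) δ with h1 | h1
        · have hmemB : ω ∈ B := by
            simp only [hBdef, hAdef, hCdef, mem_compl_iff, mem_union, mem_setOf_eq]
            push_neg
            exact ⟨h0, h1⟩
          calc ENNReal.ofReal (Real.exp (-(l * X u ω))) ≤ 1 := by
                rw [show (1:ℝ≥0∞) = ENNReal.ofReal 1 by simp]
                exact ENNReal.ofReal_le_ofReal
                  (by rw [← Real.exp_zero]; exact Real.exp_le_exp.2 (by nlinarith))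
            _ = B.indicator (fun _ => (1:ℝ≥0∞)) ω := (Set.indicator_of_mem hmemB (fun _ => (1:ℝ≥0∞))).symm
            _ ≤ A.indicator (fun _ => a) ω + B.indicator (fun _ => (1:ℝ≥0∞)) ω :=
                le_add_self
            _ ≤ _ := self_le_add_right _ _
        · have hmemC : ω ∈ C := h1
          calc ENNReal.ofReal (Real.exp (-(l * X u ω))) ≤ r :=
                ENNReal.ofReal_le_ofReal (Real.exp_le_exp.2 (by nlinarith))
            _ = C.indicator (fun _ => r) ω := (Set.indicator_of_mem hmemC (fun _ => r)).symm
            _ ≤ _ := le_add_self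
    calc expInt P X l u
        ≤ ∫⁻ ω, (A.indicator (fun _ => a) ω + B.indicator (fun _ => (1:ℝ≥0∞)) ω
            + C.indicator (fun _ => r) ω) ∂P := lintegral_mono_ae hmono
      _ = a * P A + 1 * P B + r * P C := by
          rw [lintegral_add_right _ (measurable_const.indicator hC)]
          rw [lintegral_add_right _ (measurable_const.indicator hB)]
          rw [lintegral_indicator_const hA, lintegral_indicator_const hB,
            lintegral_indicator_const hC]
      _ ≤ a * P A + P B + r * P C := by rw [one_mul]
  have hPB : P B = 1 - P (A ∪ C) := prob_compl_eq_one_sub (hA.union hC)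
  have hkey : P (A ∪ C) ≤ a * P A + r := by
    have h1 : P (A ∪ C) + 1 ≤ (a * P A + r * P C) + 1 := by
      calc P (A ∪ C) + 1 ≤ P (A ∪ C) + (a * P A + P B + r * P C) :=
            add_le_add_right (hge.trans hstep) _
        _ = a * P A + r * P C + (P B + P (A ∪ C)) := by ring
        _ = a * P A + r * P C + 1 := by
            rw [hPB, tsub_add_cancel_of_le prob_le_one]
    have h2 : P (A ∪ C) ≤ a * P A + r * P C :=
      (ENNReal.add_le_add_iff_right ENNReal.one_ne_top).1 h1
    refine h2.trans (add_le_add_right ?_ _)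
    calc r * P C ≤ r * 1 := mul_le_mul_right prob_le_one r
      _ = r := mul_one r
  refine le_trans (measure_mono ?_) hkey
  intro ω hω
  simp only [mem_setOf_eq] at hω
  rcases lt_abs.1 hω with h | h
  · exact Or.inr h
  · exact Or.inl (by simp only [hAdef, mem_setOf_eq]; linarith)

lemma tends_small (hX : IsLevyProcess P X) {K : ℝ}
    (H : Tendsto (fun t : ℝ => P {ω | X t ω ≤ 0}) atTop (𝓝 0))
    (hzero : ∀ s : ℝ, 0 ≤ s → P {ω | X s ω ≤ -K} = 0)
    (hge : ∀ u l : ℝ, 0 ≤ u → 0 < l → 1 ≤ expInt P X l u)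
    {δ : ℝ} (hδ : 0 < δ) :
    Tendsto (fun u : ℝ => P {ω | δ < |X u ω|}) atTop (𝓝 0) := by
  rw [ENNReal.tendsto_nhds_zero]
  intro ε hε
  set ε₁ := min ε 1 with hε₁def
  have hε₁ : 0 < ε₁ := lt_min hε zero_lt_one
  have hhalf : (0:ℝ≥0∞) < ε₁ / 2 := ENNReal.div_pos hε₁.ne' ENNReal.ofNat_ne_top
  obtain ⟨l, hl0, hlr⟩ : ∃ l : ℝ, 0 < l ∧ ENNReal.ofReal (Real.exp (-(l * δ))) ≤ ε₁ / 2 := by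
    have hr : Tendsto (fun l : ℝ => ENNReal.ofReal (Real.exp (-(l * δ)))) atTop (𝓝 0) := by
      have h1 : Tendsto (fun l : ℝ => -(l * δ)) atTop atBot :=
        tendsto_neg_atTop_atBot.comp (tendsto_id.atTop_mul_const hδ)
      have h2 := Real.tendsto_exp_atBot.comp h1
      have h3 := ENNReal.tendsto_ofReal h2
      simpa using h3
    obtain ⟨l, h1, h2⟩ :=
      ((ENNReal.tendsto_nhds_zero.mp hr (ε₁/2) hhalf).and (eventually_gt_atTop 0)).exists
    exact ⟨l, h2, h1⟩
  set a := ENNReal.ofReal (Real.exp (l * K)) with hadef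
  have hatop : a ≠ ∞ := ENNReal.ofReal_ne_top
  have hHa := ENNReal.tendsto_nhds_zero.mp H (ε₁ / 2 / a) (ENNReal.div_pos hhalf.ne' hatop)
  filter_upwards [hHa, eventually_ge_atTop (0:ℝ)] with u hu1 hu0
  have hbelow : ∀ᵐ ω ∂P, -K < X u ω := by
    have h := hzero u hu0
    rw [show {ω | X u ω ≤ -K} = {ω | ¬ (-K < X u ω)} by simp [not_lt]] at h
    exact ae_iff.mpr h
  calc P {ω | δ < |X u ω|}
      ≤ a * P {ω | X u ω ≤ 0} + ENNReal.ofReal (Real.exp (-(l * δ))) :=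
        tail_bound hX hu0 hl0 hδ hbelow (hge u l hu0 hl0)
    _ ≤ a * (ε₁ / 2 / a) + ε₁ / 2 := add_le_add (mul_le_mul_right hu1 a) hlr
    _ ≤ ε₁ / 2 + ε₁ / 2 := add_le_add_left ENNReal.mul_div_le _
    _ = ε₁ := ENNReal.add_halves _
    _ ≤ ε := min_le_left _ _

lemma levy_trivial_of_small (hX : IsLevyProcess P X)
    (hsmall : ∀ δ : ℝ, 0 < δ → Tendsto (fun u : ℝ => P {ω | δ < |X u ω|}) atTop (𝓝 0))
    {s : ℝ} (hs : 0 ≤ s) : P {ω | X s ω ≤ 0} = 1 := by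
  have habs : ∀ δ : ℝ, 0 < δ → P {ω | δ < |X s ω|} = 0 := by
    intro δ hδ
    have hsetm : MeasurableSet {x : ℝ | δ < |x|} :=
      measurableSet_lt measurable_const _root_.measurable_abs
    have hkey : ∀ᶠ u in (atTop : Filter ℝ), P {ω | δ < |X s ω|} ≤
        P {ω | δ/2 < |X (u+s) ω|} + P {ω | δ/2 < |X u ω|} := by
      filter_upwards [eventually_ge_atTop (0:ℝ)] with u hu
      have hident := hX.stationary u s hu hs
      have heq : P {ω | δ < |X s ω|} = P {ω | δ < |X (u+s) ω - X u ω|} :=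
        (identDistrib_measure_preimage hident hsetm).symm
      rw [heq]
      refine le_trans (measure_mono ?_) (measure_union_le _ _)
      intro ω h
      simp only [mem_setOf_eq, mem_union] at h ⊢
      by_contra hcon
      push_neg at hcon
      obtain ⟨h1, h2⟩ := hcon
      have habs2 : |X (u+s) ω - X u ω| ≤ δ := by
        calc |X (u+s) ω - X u ω| ≤ |X (u+s) ω| + |X u ω| := abs_sub _ _
          _ ≤ δ/2 + δ/2 := add_le_add h1 h2
          _ = δ := by ring
      linarith
    have h2 : Tendsto (fun u : ℝ => P {ω | δ/2 < |X (u+s) ω|} + P {ω | δ/2 < |X u ω|})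
        atTop (𝓝 0) := by
      have hfirst : Tendsto (fun u : ℝ => P {ω | δ/2 < |X (u+s) ω|}) atTop (𝓝 0) :=
        (hsmall (δ/2) (by linarith)).comp (tendsto_atTop_add_const_right atTop s tendsto_id)
      have := hfirst.add (hsmall (δ/2) (by linarith))
      simpa using this
    have h3 : Tendsto (fun _ : ℝ => P {ω | δ < |X s ω|}) atTop (𝓝 0) :=
      tendsto_of_tendsto_of_tendsto_of_le_of_le' tendsto_const_nhds h2
        (Eventually.of_forall fun _ => zero_le) hkey
    exact tendsto_nhds_unique tendsto_const_nhds h3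
  have hne : P {ω | X s ω ≠ 0} = 0 := by
    have hsub : {ω | X s ω ≠ 0} ⊆ ⋃ n : ℕ, {ω | 1/((n:ℝ)+1) < |X s ω|} := by
      intro ω h
      simp only [mem_setOf_eq, mem_iUnion] at h ⊢
      obtain ⟨n, hn⟩ := exists_nat_one_div_lt (abs_pos.2 h)
      exact ⟨n, hn⟩
    exact measure_mono_null hsub (measure_iUnion_null fun n => habs _ (by positivity))
  have h1 : (1:ℝ≥0∞) ≤ P {ω | X s ω ≤ 0} + P {ω | X s ω ≠ 0} := by
    calc (1:ℝ≥0∞) = P univ := measure_univ.symm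
      _ ≤ P ({ω | X s ω ≤ 0} ∪ {ω | X s ω ≠ 0}) := by
          refine measure_mono fun ω _ => ?_
          by_cases h : X s ω ≤ 0
          · exact Or.inl h
          · exact Or.inr fun h0 => h (le_of_eq h0)
      _ ≤ _ := measure_union_le _ _
  rw [hne, add_zero] at h1
  exact le_antisymm prob_le_one h1

end AuxLevy3
section AuxLevy4

variable {P : Measure Ω} [IsProbabilityMeasure P] {X : ℝ → Ω → ℝ}

set_option linter.unusedSectionVars false

lemma levy_caseA_bound (hX : IsLevyProcess P X) {s t K : ℝ} (hs : 0 ≤ s) (ht : 0 ≤ t) :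
    P {ω | X s ω ≤ -K} * P {ω | X t ω ≤ K} ≤ P {ω | X (s+t) ω ≤ 0} := by
  have hind : IndepFun (X s) (fun ω => X (s+t) ω - X s ω) P :=
    levy_indep_base hX hs (le_add_of_nonneg_right ht)
  have hmul := hind.measure_inter_preimage_eq_mul (Iic (-K)) (Iic K)
    measurableSet_Iic measurableSet_Iic
  have hident : P ((fun ω => X (s+t) ω - X s ω) ⁻¹' Iic K) = P (X t ⁻¹' Iic K) :=
    identDistrib_measure_preimage (hX.stationary s t hs ht) measurableSet_Iic
  have hsub : (X s ⁻¹' Iic (-K)) ∩ ((fun ω => X (s+t) ω - X s ω) ⁻¹' Iic K) ⊆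
      {ω | X (s+t) ω ≤ 0} := by
    intro ω ⟨h1, h2⟩
    simp only [mem_preimage, mem_Iic] at h1 h2
    simp only [mem_setOf_eq]
    linarith
  calc P {ω | X s ω ≤ -K} * P {ω | X t ω ≤ K}
      = P (X s ⁻¹' Iic (-K)) * P ((fun ω => X (s+t) ω - X s ω) ⁻¹' Iic K) := by
        rw [hident]; rfl
    _ = P ((X s ⁻¹' Iic (-K)) ∩ ((fun ω => X (s+t) ω - X s ω) ⁻¹' Iic K)) := hmul.symm
    _ ≤ P {ω | X (s+t) ω ≤ 0} := measure_mono hsub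

lemma levy_key (hX : IsLevyProcess P X)
    (H : Tendsto (fun t : ℝ => P {ω | X t ω ≤ 0}) atTop (𝓝 0)) (K : ℝ) :
    Tendsto (fun t : ℝ => P {ω | X t ω ≤ K}) atTop (𝓝 0) := by
  by_cases hA : ∃ s : ℝ, 0 ≤ s ∧ 0 < P {ω | X s ω ≤ -K}
  · obtain ⟨s, hs, hc⟩ := hA
    set c := P {ω | X s ω ≤ -K} with hcdef
    have hcne : c ≠ 0 := hc.ne'
    have hctop : c ≠ ∞ := measure_ne_top P _
    have h0 : Tendsto (fun t : ℝ => c⁻¹ * P {ω | X (s+t) ω ≤ 0}) atTop (𝓝 0) := by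
      have hinner : Tendsto (fun t : ℝ => P {ω | X (s+t) ω ≤ 0}) atTop (𝓝 0) :=
        H.comp (tendsto_atTop_add_const_left atTop s tendsto_id)
      have := ENNReal.Tendsto.const_mul hinner (Or.inr (ENNReal.inv_ne_top.2 hcne))
      simpa using this
    refine tendsto_of_tendsto_of_tendsto_of_le_of_le' tendsto_const_nhds h0
      (Eventually.of_forall fun _ => zero_le) ?_
    filter_upwards [eventually_ge_atTop (0:ℝ)] with t ht
    have hbd := levy_caseA_bound (K := K) hX hs ht
    calc P {ω | X t ω ≤ K}
        = c⁻¹ * (c * P {ω | X t ω ≤ K}) := by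
          rw [← mul_assoc, ENNReal.inv_mul_cancel hcne hctop, one_mul]
      _ ≤ c⁻¹ * P {ω | X (s+t) ω ≤ 0} := mul_le_mul_right hbd _
  · push_neg at hA
    have hzero : ∀ s : ℝ, 0 ≤ s → P {ω | X s ω ≤ -K} = 0 := fun s hs =>
      le_antisymm (hA s hs) (zero_le)
    rcases le_or_gt K 0 with hK | hK
    · have hev : ∀ᶠ t in (atTop : Filter ℝ), P {ω | X t ω ≤ K} = 0 := by
        filter_upwards [eventually_ge_atTop (0:ℝ)] with t ht
        refine le_antisymm (le_trans (measure_mono ?_) (hzero t ht).le) (zero_le)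
        intro ω h
        simp only [mem_setOf_eq] at h ⊢
        linarith
      exact (tendsto_congr' hev).mpr tendsto_const_nhds
    · by_cases hC : ∃ u l : ℝ, 0 ≤ u ∧ 0 < l ∧ expInt P X l u < 1
      · obtain ⟨u, l, hu, hl, hψ⟩ := hC
        have hupos : 0 < u := by
          rcases hu.eq_or_lt with h | h
          · exfalso
            rw [← h, expInt_zero hX l] at hψ
            exact lt_irrefl _ hψ
          · exact h
        have hbound : ∀ᶠ t in (atTop : Filter ℝ), P {ω | X t ω ≤ K} ≤
            ENNReal.ofReal (Real.exp (l * (2*K))) * (expInt P X l u) ^ (⌊t/u⌋₊) := by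
          filter_upwards [eventually_ge_atTop (0:ℝ)] with t ht
          set n := ⌊t/u⌋₊ with hndef
          have hn0 : (0:ℝ) ≤ (n:ℝ) * u := by positivity
          have hnu : (n:ℝ) * u ≤ t := by
            rw [← le_div_iff₀ hupos]
            exact Nat.floor_le (div_nonneg ht hupos.le)
          have hrem : 0 ≤ t - (n:ℝ) * u := sub_nonneg.2 hnu
          have hstat := hX.stationary ((n:ℝ)*u) (t - (n:ℝ)*u) hn0 hrem
          have hstat' : IdentDistrib (fun ω => X t ω - X ((n:ℝ)*u) ω) (X (t - (n:ℝ)*u)) P P := by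
            convert hstat using 2 with ω
            ring_nf
          have hinc0 : P {ω | X t ω - X ((n:ℝ)*u) ω ≤ -K} = 0 := by
            have := identDistrib_measure_preimage hstat' (measurableSet_Iic (a := -K))
            calc P {ω | X t ω - X ((n:ℝ)*u) ω ≤ -K}
                = P (X (t - (n:ℝ)*u) ⁻¹' Iic (-K)) := this
              _ = 0 := hzero _ hrem
          have hae : ∀ᵐ ω ∂P, -K < X t ω - X ((n:ℝ)*u) ω := by
            rw [show {ω | X t ω - X ((n:ℝ)*u) ω ≤ -K}
              = {ω | ¬ (-K < X t ω - X ((n:ℝ)*u) ω)} by simp [not_lt]] at hinc0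
            exact ae_iff.mpr hinc0
          have hmono : P {ω | X t ω ≤ K} ≤ P {ω | X ((n:ℝ)*u) ω ≤ 2*K} := by
            refine measure_mono_ae ?_
            filter_upwards [hae] with ω hω hmem
            have hmem' : X t ω ≤ K := hmem
            show X ((n:ℝ)*u) ω ≤ 2*K
            linarith
          calc P {ω | X t ω ≤ K} ≤ P {ω | X ((n:ℝ)*u) ω ≤ 2*K} := hmono
            _ ≤ ENNReal.ofReal (Real.exp (l * (2*K))) * expInt P X l ((n:ℝ)*u) :=
                chernoff_bound hX hl.le _ _
            _ = ENNReal.ofReal (Real.exp (l * (2*K))) * (expInt P X l u) ^ n := by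
                rw [expInt_nat_mul hX hupos.le l n]
        have hrhs : Tendsto (fun t : ℝ =>
            ENNReal.ofReal (Real.exp (l * (2*K))) * (expInt P X l u) ^ (⌊t/u⌋₊))
            atTop (𝓝 0) := by
          have hfloor : Tendsto (fun t : ℝ => ⌊t/u⌋₊) atTop atTop :=
            tendsto_nat_floor_atTop.comp (Tendsto.atTop_div_const hupos tendsto_id)
          have hpow := (ENNReal.tendsto_pow_atTop_nhds_zero_of_lt_one hψ).comp hfloor
          have := ENNReal.Tendsto.const_mul (a := ENNReal.ofReal (Real.exp (l * (2*K)))) hpow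
            (Or.inr ENNReal.ofReal_ne_top)
          simpa using this
        exact tendsto_of_tendsto_of_tendsto_of_le_of_le' tendsto_const_nhds hrhs
          (Eventually.of_forall fun _ => zero_le) hbound
      · push_neg at hC
        have hge : ∀ u l : ℝ, 0 ≤ u → 0 < l → 1 ≤ expInt P X l u := fun u l hu hl =>
          hC u l hu hl
        have hsmall : ∀ δ : ℝ, 0 < δ →
            Tendsto (fun v : ℝ => P {ω | δ < |X v ω|}) atTop (𝓝 0) := fun δ hδ =>
          tends_small hX H hzero hge hδ
        exfalso
        have hdeg : ∀ s : ℝ, 0 ≤ s → P {ω | X s ω ≤ 0} = 1 := fun s hs =>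
          levy_trivial_of_small hX hsmall hs
        obtain ⟨t, ht1, ht2⟩ :=
          ((ENNReal.tendsto_nhds_zero.mp H (1/2) (by norm_num)).and
            (eventually_ge_atTop (0:ℝ))).exists
        rw [hdeg t ht2] at ht1
        norm_num at ht1

end AuxLevy4

/-- For a Lévy process `X` with `Π(ℝ) > 0`: `P(X_t > 0) → 1` as `t → ∞` if and only if
`X_t → +∞` in probability, i.e. `P(X_t ≤ K) → 0` for every `K`. -/
theorem levy_prob_pos_iff_tendsto_infty_in_prob
    (P : Measure Ω) [IsProbabilityMeasure P] (X : ℝ → Ω → ℝ) (Pi : Measure ℝ)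
    (hX : IsLevyProcess P X) (hPi : IsLevyMeasureOf Pi P X)
    (hPipos : 0 < Pi Set.univ) :
    Tendsto (fun t : ℝ => P {ω | 0 < X t ω}) atTop (𝓝 1) ↔
      ∀ K : ℝ, Tendsto (fun t : ℝ => P {ω | X t ω ≤ K}) atTop (𝓝 0) := by
  have hm : ∀ t : ℝ, MeasurableSet {ω | X t ω ≤ 0} := fun t =>
    measurableSet_le (hX.measurable t) measurable_const
  have hcompl : ∀ t : ℝ, {ω | (0:ℝ) < X t ω} = {ω | X t ω ≤ 0}ᶜ := fun t => by
    ext ω; simp [not_le]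
  constructor
  · intro h1 K
    refine levy_key hX ?_ K
    have heq : ∀ t : ℝ, P {ω | X t ω ≤ 0} = 1 - P {ω | (0:ℝ) < X t ω} := by
      intro t
      have h : {ω | X t ω ≤ 0} = {ω | (0:ℝ) < X t ω}ᶜ := by ext ω; simp [not_lt]
      rw [h, prob_compl_eq_one_sub (measurableSet_lt measurable_const (hX.measurable t))]
    have hsub : Tendsto (fun t : ℝ => 1 - P {ω | (0:ℝ) < X t ω}) atTop (𝓝 (1 - 1)) :=
      ENNReal.Tendsto.sub tendsto_const_nhds h1 (Or.inl ENNReal.one_ne_top)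
    have h11 : (1:ℝ≥0∞) - 1 = 0 := by simp
    rw [h11] at hsub
    simp_rw [heq]
    exact hsub
  · intro h2
    have h0 := h2 0
    have heq : ∀ t : ℝ, P {ω | (0:ℝ) < X t ω} = 1 - P {ω | X t ω ≤ 0} := fun t => by
      rw [hcompl t, prob_compl_eq_one_sub (hm t)]
    have hsub : Tendsto (fun t : ℝ => 1 - P {ω | X t ω ≤ 0}) atTop (𝓝 (1 - 0)) :=
      ENNReal.Tendsto.sub tendsto_const_nhds h0 (Or.inl ENNReal.one_ne_top)
    have h10 : (1:ℝ≥0∞) - 0 = 1 := by simp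
    rw [h10] at hsub
    simp_rw [heq]
    exact hsub

end
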